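/- Let g' : (0,∞) → (0,∞) be increasing (hence g convex) with second derivative g'' satisfying (p-2)g'(t) ≤ t·g''(t) ≤ (q-2)g'(t) for all t > 0, where 2 < p ≤ q. Then there exists a constant c > 0 depending only on p and q such that for all a, b > 0 with a ≠ b: |g'(a) − g'(b)| ≤ c · g''(a+b) · |a − b|. -/

import Mathlib

/-- Part of Lemma A.3: if `g'` is positive and increasing on `(0,∞)` with
`(p-2) g'(t) ≤ t g''(t) ≤ (q-2) g'(t)`, `2 < p ≤ q`, then
`|g'(a) - g'(b)| ≤ c g''(a+b) |a-b|` for `a, b > 0`, `a ≠ b`. -/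
theorem stmt_3 (g' g'' : ℝ → ℝ) (p q : ℝ) (hp : 2 < p) (hpq : p ≤ q)
    (hg'_pos : ∀ t > 0, 0 < g' t)
    (hg'_mono : StrictMonoOn g' (Set.Ioi 0))
    (hderiv : ∀ t > 0, HasDerivAt g' (g'' t) t)
    (hlow : ∀ t > 0, (p - 2) * g' t ≤ t * g'' t)
    (hup : ∀ t > 0, t * g'' t ≤ (q - 2) * g' t) :
    ∃ c > (0:ℝ), ∀ a > (0:ℝ), ∀ b > (0:ℝ), a ≠ b →
      |g' a - g' b| ≤ c * g'' (a + b) * |a - b| := by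
  have hp2 : 0 < p - 2 := by linarith
  have hq1 : 0 < q - 1 := by linarith
  refine ⟨3 * (q - 1) / (p - 2), by positivity, ?_⟩
  have key : ∀ a b : ℝ, 0 < a → a < b →
      g' b - g' a ≤ 3 * (q - 1) / (p - 2) * g'' (a + b) * (b - a) := by
    intro a b ha hab
    have hb : 0 < b := ha.trans hab
    have hab0 : 0 < a + b := by linarith
    have hsum : 0 < g' (a + b) := hg'_pos _ hab0
    have hlow' := hlow (a + b) hab0
    have hgpp : 0 < g'' (a + b) := by nlinarith
    have hmono : g' b ≤ g' (a + b) :=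
      le_of_lt (hg'_mono (Set.mem_Ioi.2 hb) (Set.mem_Ioi.2 hab0) (by linarith))
    by_cases hcase : b ≤ 2 * a
    · -- MVT
      have hcont : ContinuousOn g' (Set.Icc a b) := fun x hx =>
        ((hderiv x (lt_of_lt_of_le ha hx.1)).continuousAt).continuousWithinAt
      obtain ⟨ξ, hξ, hξeq⟩ := exists_hasDerivAt_eq_slope g' g'' hab hcont
        (fun x hx => hderiv x (ha.trans hx.1))
      have hξa : a < ξ := hξ.1
      have hξb : ξ < b := hξ.2
      have hξ0 : 0 < ξ := ha.trans hξa
      have hgξ : 0 < g' ξ := hg'_pos _ hξ0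
      have hupξ := hup ξ hξ0
      have hlowξ := hlow ξ hξ0
      have hmξ : g' ξ ≤ g' (a + b) :=
        le_of_lt (hg'_mono (Set.mem_Ioi.2 hξ0) (Set.mem_Ioi.2 hab0) (by linarith))
      have heq : g' b - g' a = g'' ξ * (b - a) := by
        rw [hξeq, div_mul_cancel₀ _ (by linarith : b - a ≠ 0)]
      rw [heq]
      have hgξpp : 0 < g'' ξ := by nlinarith
      have h1 : a * g'' ξ ≤ (q - 2) * g' (a + b) := by
        nlinarith [mul_le_mul_of_nonneg_right (le_of_lt hξa) (le_of_lt hgξpp),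
          mul_nonneg (by linarith : (0:ℝ) ≤ q - 2) (by linarith : 0 ≤ g' (a + b) - g' ξ)]
      have h2 : (p - 2) * g' (a + b) ≤ 3 * a * g'' (a + b) := by nlinarith
      have hba : 0 ≤ b - a := by linarith
      have h6 : a * ((p - 2) * g'' ξ) ≤ a * (3 * (q - 2) * g'' (a + b)) := by
        nlinarith [mul_le_mul_of_nonneg_left h1 hp2.le,
          mul_le_mul_of_nonneg_left h2 (by linarith : (0:ℝ) ≤ q - 2)]
      have h7 : (p - 2) * g'' ξ ≤ 3 * (q - 2) * g'' (a + b) := (mul_le_mul_iff_right₀ ha).mp h6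
      rw [div_mul_eq_mul_div, div_mul_eq_mul_div, le_div_iff₀ hp2]
      nlinarith [mul_le_mul_of_nonneg_right h7 hba, mul_nonneg hgpp.le hba]
    · push_neg at hcase
      have hga : 0 < g' a := hg'_pos _ ha
      have h3 : g' b - g' a ≤ g' (a + b) := by linarith
      have h4 : (p - 2) * g' (a + b) ≤ (a + b) * g'' (a + b) := hlow'
      have h5 : a + b ≤ 3 * (b - a) := by linarith
      rw [div_mul_eq_mul_div, div_mul_eq_mul_div, le_div_iff₀ hp2]
      nlinarith [mul_le_mul_of_nonneg_right h5 hgpp.le,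
        mul_nonneg (mul_nonneg (by linarith : (0:ℝ) ≤ q - 2) hgpp.le)
          (by linarith : (0:ℝ) ≤ b - a),
        mul_le_mul_of_nonneg_right h3 hp2.le,
        mul_le_mul_of_nonneg_right h4 (le_of_lt (sub_pos.2 hab))]
  intro a ha b hb hne
  rcases lt_or_gt_of_ne hne with h | h
  · rw [abs_of_nonpos (by linarith [(hg'_mono (Set.mem_Ioi.2 ha) (Set.mem_Ioi.2 hb) h).le] :
      g' a - g' b ≤ 0), abs_of_nonpos (by linarith : a - b ≤ 0)]
    have := key a b ha h
    linarith
  · rw [abs_of_nonneg (by linarith [(hg'_mono (Set.mem_Ioi.2 hb) (Set.mem_Ioi.2 ha) h).le] :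
      0 ≤ g' a - g' b), abs_of_nonneg (by linarith : 0 ≤ a - b)]
    have := key b a hb h
    rw [add_comm b a] at this
    linarith
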